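/- The map A ↦ det(A⊕A) is a guardian map for Hurwitz stability: for every real n×n matrix A, (i) if every complex eigenvalue of A has negative real part, then det(A⊕A) ≠ 0; and (ii) if A has a complex eigenvalue with zero real part, then det(A⊕A) = 0. Here A⊕A := A⊗Iₙ + Iₙ⊗A is the Kronecker sum and the determinant is of the associated n²×n² real matrix. -/

import Mathlib

open Matrix Kronecker Polynomial

private lemma eval_charpoly_det {m : Type*} [DecidableEq m] [Fintype m] {R : Type*} [CommRing R]
    (M : Matrix m m R) (t : R) :
    M.charpoly.eval t = (Matrix.diagonal (fun _ => t) - M).det := by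
  rw [Matrix.charpoly, ← Polynomial.coe_evalRingHom, RingHom.map_det]
  congr 1
  ext i j
  by_cases h : i = j <;>
    simp [h, Matrix.charmatrix_apply, Matrix.diagonal_apply]

private lemma charpoly_transpose' {m : Type*} [DecidableEq m] [Fintype m] {R : Type*} [CommRing R]
    (M : Matrix m m R) : Mᵀ.charpoly = M.charpoly := by
  rw [Matrix.charpoly, Matrix.charpoly, ← Matrix.det_transpose (Matrix.charmatrix M)]
  congr 1
  ext i j
  by_cases h : i = j
  · subst h; simp [Matrix.charmatrix_apply]
  · rw [Matrix.transpose_apply, Matrix.charmatrix_apply_ne _ _ _ h,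
      Matrix.charmatrix_apply_ne _ _ _ (Ne.symm h), Matrix.transpose_apply]

private lemma exists_eigenvec {n : ℕ} (M : Matrix (Fin n) (Fin n) ℂ) (t : ℂ)
    (h : M.charpoly.IsRoot t) : ∃ v : Fin n → ℂ, v ≠ 0 ∧ M *ᵥ v = t • v := by
  have hdet : (Matrix.diagonal (fun _ => t) - M).det = 0 := by
    rw [← eval_charpoly_det]; exact h
  obtain ⟨v, hv, h0⟩ := Matrix.exists_mulVec_eq_zero_iff.mpr hdet
  refine ⟨v, hv, ?_⟩
  have := h0
  rw [Matrix.sub_mulVec, sub_eq_zero] at this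
  rw [← this]
  ext i
  simp [Matrix.mulVec_diagonal]

private lemma intertwine_pow {n : ℕ} (B X : Matrix (Fin n) (Fin n) ℂ)
    (h1 : X * Bᵀ = -B * X) : ∀ k : ℕ, X * Bᵀ ^ k = (-B) ^ k * X := by
  intro k
  induction k with
  | zero => simp
  | succ k ih =>
      rw [pow_succ, ← mul_assoc, ih, mul_assoc, h1, pow_succ, mul_assoc]

private lemma intertwine_aeval {n : ℕ} (B X : Matrix (Fin n) (Fin n) ℂ)
    (h1 : X * Bᵀ = -B * X) (p : ℂ[X]) :
    X * (Polynomial.aeval Bᵀ p) = (Polynomial.aeval (-B) p) * X := by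
  induction p using Polynomial.induction_on' with
  | add p q hp hq => rw [map_add, map_add, mul_add, add_mul, hp, hq]
  | monomial k a =>
      rw [Polynomial.aeval_monomial, Polynomial.aeval_monomial, ← mul_assoc,
        ← Algebra.commutes a X, mul_assoc, intertwine_pow B X h1 k, ← mul_assoc,
        Algebra.commutes a ((-B) ^ k), mul_assoc]

theorem det_kroneckerSum_guardian (n : ℕ) (A : Matrix (Fin n) (Fin n) ℝ) :
    ((∀ z : ℂ, (A.charpoly.map (algebraMap ℝ ℂ)).IsRoot z → z.re < 0) →
      (A ⊗ₖ (1 : Matrix (Fin n) (Fin n) ℝ) + (1 : Matrix (Fin n) (Fin n) ℝ) ⊗ₖ A).det ≠ 0) ∧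
    ((∃ z : ℂ, (A.charpoly.map (algebraMap ℝ ℂ)).IsRoot z ∧ z.re = 0) →
      (A ⊗ₖ (1 : Matrix (Fin n) (Fin n) ℝ) + (1 : Matrix (Fin n) (Fin n) ℝ) ⊗ₖ A).det = 0) := by
  set B : Matrix (Fin n) (Fin n) ℂ := A.map (algebraMap ℝ ℂ) with hB
  have hp : B.charpoly = A.charpoly.map (algebraMap ℝ ℂ) := Matrix.charpoly_map A _
  -- casting the real determinant to ℂ
  have hcast : ((A ⊗ₖ (1 : Matrix (Fin n) (Fin n) ℝ) +
      (1 : Matrix (Fin n) (Fin n) ℝ) ⊗ₖ A).det : ℂ) =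
      (B ⊗ₖ (1 : Matrix (Fin n) (Fin n) ℂ) + (1 : Matrix (Fin n) (Fin n) ℂ) ⊗ₖ B).det := by
    rw [← Complex.coe_algebraMap, RingHom.map_det (algebraMap ℝ ℂ)]
    congr 1
    rw [RingHom.mapMatrix_apply]
    ext x y
    obtain ⟨i, j⟩ := x
    obtain ⟨k, l⟩ := y
    simp only [Matrix.map_apply, Matrix.add_apply, Matrix.kroneckerMap_apply, Matrix.one_apply,
      hB, mul_ite, ite_mul, mul_one, one_mul, mul_zero, zero_mul, map_add]
    split_ifs <;> simp
  -- mulVec of the Kronecker sum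
  have key : ∀ (u : Fin n × Fin n → ℂ) (i j : Fin n),
      ((B ⊗ₖ (1 : Matrix (Fin n) (Fin n) ℂ) + (1 : Matrix (Fin n) (Fin n) ℂ) ⊗ₖ B) *ᵥ u) (i, j)
        = (∑ k, B i k * u (k, j)) + ∑ l, B j l * u (i, l) := by
    intro u i j
    simp [Matrix.mulVec, dotProduct, Fintype.sum_prod_type, Matrix.kroneckerMap_apply,
      Matrix.one_apply, add_mul, Finset.sum_add_distrib, ite_mul, mul_ite,
      Finset.sum_ite_eq, Finset.sum_ite_eq']
  constructor
  · -- part (i)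
    intro h hdet0
    have hdetC : (B ⊗ₖ (1 : Matrix (Fin n) (Fin n) ℂ) +
        (1 : Matrix (Fin n) (Fin n) ℂ) ⊗ₖ B).det = 0 := by
      rw [← hcast, hdet0, Complex.ofReal_zero]
    obtain ⟨u, hu, h0⟩ := Matrix.exists_mulVec_eq_zero_iff.mpr hdetC
    set X : Matrix (Fin n) (Fin n) ℂ := Matrix.of (fun i j => u (i, j)) with hXdef
    have hX : X ≠ 0 := by
      intro hX0
      apply hu
      funext ij
      have h1 : u ij = X ij.1 ij.2 := rfl
      rw [h1, hX0]
      simp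
    have hXeq : X * Bᵀ = -B * X := by
      ext i j
      have h2 := congrFun h0 (i, j)
      rw [key u i j] at h2
      simp only [Pi.zero_apply] at h2
      simp only [Matrix.mul_apply, Matrix.transpose_apply, Matrix.neg_apply, Matrix.neg_mul,
        hXdef, Matrix.of_apply]
      calc ∑ x, u (i, x) * B j x = ∑ x, B j x * u (i, x) :=
            Finset.sum_congr rfl fun x _ => mul_comm _ _
        _ = ∑ x, -(B i x * u (x, j)) := by
            rw [Finset.sum_neg_distrib]
            linear_combination h2
        _ = ∑ x, -B i x * u (x, j) := Finset.sum_congr rfl fun x _ => (neg_mul _ _).symm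
    -- Cayley–Hamilton + invertibility ⇒ X = 0
    have hCH : X * (Polynomial.aeval Bᵀ Bᵀ.charpoly) = (Polynomial.aeval (-B) B.charpoly) * X := by
      rw [← charpoly_transpose' B]
      exact intertwine_aeval B X hXeq _
    rw [Matrix.aeval_self_charpoly, mul_zero] at hCH
    -- det (aeval (-B) B.charpoly) ≠ 0
    have hmonic : B.charpoly.Monic := Matrix.charpoly_monic B
    have hsplit : B.charpoly.Splits := IsAlgClosed.splits _
    have hprod : B.charpoly = (B.charpoly.roots.map fun a => Polynomial.X - Polynomial.C a).prod :=
      hsplit.eq_prod_roots_of_monic hmonic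
    have hroots : ∀ r ∈ B.charpoly.roots, B.charpoly.eval (-r) ≠ 0 := by
      intro r hr hev
      have hr1 : r.re < 0 := h r (by rw [← hp]; exact Polynomial.isRoot_of_mem_roots hr)
      have hr2 : (-r).re < 0 := h (-r) (by rw [← hp]; exact hev)
      simp only [Complex.neg_re] at hr2
      linarith
    have hdetA : (Polynomial.aeval (-B) B.charpoly).det ≠ 0 := by
      have hp2 : B.charpoly =
          ((B.charpoly.roots.map fun a => Polynomial.X - Polynomial.C a).toList).prod := by
        conv_lhs => rw [hprod]
        rw [Multiset.prod_toList]
      rw [hp2, map_list_prod, ← Matrix.coe_detMonoidHom, map_list_prod, List.map_map]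
      apply List.prod_ne_zero
      intro hmem
      rw [List.mem_map] at hmem
      obtain ⟨q, hq, hq0⟩ := hmem
      rw [Multiset.mem_toList, Multiset.mem_map] at hq
      obtain ⟨r, hrmem, rfl⟩ := hq
      apply hroots r hrmem
      rw [eval_charpoly_det, ← hq0]
      simp only [Function.comp_apply, Matrix.coe_detMonoidHom]
      congr 1
      rw [map_sub, Polynomial.aeval_X, Polynomial.aeval_C]
      ext i j
      by_cases hij : i = j <;>
        simp [hij, Matrix.sub_apply, Matrix.neg_apply, Matrix.diagonal_apply,
          Matrix.algebraMap_matrix_apply] <;> ring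
    have hunit : IsUnit (Polynomial.aeval (-B) B.charpoly) :=
      (Matrix.isUnit_iff_isUnit_det _).mpr (isUnit_iff_ne_zero.mpr hdetA)
    apply hX
    calc X = (↑hunit.unit⁻¹ * ↑hunit.unit) * X := by rw [Units.inv_mul, one_mul]
      _ = ↑hunit.unit⁻¹ * ((Polynomial.aeval (-B) B.charpoly) * X) := by
          rw [mul_assoc, IsUnit.unit_spec]
      _ = 0 := by rw [← hCH, mul_zero]
  · -- part (ii)
    rintro ⟨z, hz, hre⟩
    have hzB : B.charpoly.IsRoot z := by rw [hp]; exact hz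
    have hzbar : B.charpoly.IsRoot (starRingEnd ℂ z) := by
      rw [hp]
      have : Polynomial.aeval (starRingEnd ℂ z) A.charpoly =
          starRingEnd ℂ (Polynomial.aeval z A.charpoly) := Polynomial.aeval_conj _ _
      have hz' : Polynomial.aeval z A.charpoly = 0 := by
        rw [Polynomial.aeval_def, ← Polynomial.eval_map]
        exact hz
      unfold Polynomial.IsRoot
      rw [Polynomial.eval_map, ← Polynomial.aeval_def, this, hz', map_zero]
    obtain ⟨v, hv, hveq⟩ := exists_eigenvec B z hzB
    obtain ⟨w, hw, hweq⟩ := exists_eigenvec B (starRingEnd ℂ z) hzbar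
    have hdetC : (B ⊗ₖ (1 : Matrix (Fin n) (Fin n) ℂ) +
        (1 : Matrix (Fin n) (Fin n) ℂ) ⊗ₖ B).det = 0 := by
      rw [← Matrix.exists_mulVec_eq_zero_iff]
      refine ⟨fun p => v p.1 * w p.2, ?_, ?_⟩
      · obtain ⟨i, hi⟩ := Function.ne_iff.mp hv
        obtain ⟨j, hj⟩ := Function.ne_iff.mp hw
        intro hc
        have := congrFun hc (i, j)
        simp only [Pi.zero_apply] at this
        exact (mul_ne_zero (by simpa using hi) (by simpa using hj)) this
      · funext ⟨i, j⟩
        rw [key]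
        have e1 : ∑ k, B i k * (v k * w j) = z * v i * w j := by
          have := congrFun hveq i
          simp only [Matrix.mulVec, dotProduct, Pi.smul_apply, smul_eq_mul] at this
          calc ∑ k, B i k * (v k * w j) = (∑ k, B i k * v k) * w j := by
                rw [Finset.sum_mul]; apply Finset.sum_congr rfl; intro k _; ring
            _ = z * v i * w j := by rw [this]
        have e2 : ∑ l, B j l * (v i * w l) = v i * (starRingEnd ℂ z * w j) := by
          have := congrFun hweq j
          simp only [Matrix.mulVec, dotProduct, Pi.smul_apply, smul_eq_mul] at this
          calc ∑ l, B j l * (v i * w l) = v i * (∑ l, B j l * w l) := by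
                rw [Finset.mul_sum]; apply Finset.sum_congr rfl; intro l _; ring
            _ = v i * (starRingEnd ℂ z * w j) := by rw [this]
        rw [e1, e2]
        have hzz : z + starRingEnd ℂ z = 0 := by
          rw [Complex.add_conj, hre]
          simp
        simp only [Pi.zero_apply]
        linear_combination (v i * w j) * hzz
    have : ((A ⊗ₖ (1 : Matrix (Fin n) (Fin n) ℝ) +
        (1 : Matrix (Fin n) (Fin n) ℝ) ⊗ₖ A).det : ℂ) = 0 := by rw [hcast, hdetC]
    exact_mod_cast this
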